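/- Data-processing inequality with expectations of random variables: let P and Q be two probability measures on a measurable space (Ω, F), and let X : Ω → [0,1] be a measurable function. Then kl(E_P[X], E_Q[X]) ≤ KL(P, Q), where E_P[X] and E_Q[X] are the expectations of X under P and Q respectively. -/

import Mathlib

open MeasureTheory
open scoped ENNReal Classical
open Real Filter

section DPIaux
variable {Ω : Type*} [MeasurableSpace Ω]

lemma dpi_exp_integral_le {μ : Measure Ω} [IsProbabilityMeasure μ] {h : Ω → ℝ}
    (hi : Integrable h μ) (hei : Integrable (fun ω => Real.exp (h ω)) μ) :
    Real.exp (∫ ω, h ω ∂μ) ≤ ∫ ω, Real.exp (h ω) ∂μ :=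
  convexOn_exp.map_integral_le continuous_exp.continuousOn isClosed_univ
    (Filter.Eventually.of_forall fun _ => trivial) hi hei

lemma dpi_llr_nonneg {μ ν : Measure Ω} [IsProbabilityMeasure μ] [IsProbabilityMeasure ν]
    (hμν : μ ≪ ν) (h_int : Integrable (llr μ ν) μ) : 0 ≤ ∫ ω, llr μ ν ω ∂μ := by
  have hexp : (fun ω => Real.exp (- llr μ ν ω)) =ᵐ[μ] fun ω => (ν.rnDeriv μ ω).toReal :=
    exp_neg_llr hμν
  have hint2 : Integrable (fun ω => Real.exp (- llr μ ν ω)) μ :=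
    Measure.integrable_toReal_rnDeriv.congr hexp.symm
  have h1 : ∫ ω, Real.exp (- llr μ ν ω) ∂μ ≤ 1 := by
    rw [integral_congr_ae hexp]
    calc ∫ ω, (ν.rnDeriv μ ω).toReal ∂μ = ∫ ω in Set.univ, (ν.rnDeriv μ ω).toReal ∂μ := by
          rw [setIntegral_univ]
      _ ≤ (ν Set.univ).toReal := Measure.setIntegral_toReal_rnDeriv_le (measure_ne_top ν _)
      _ = 1 := by simp
  have h2 : Real.exp (∫ ω, - llr μ ν ω ∂μ) ≤ ∫ ω, Real.exp (- llr μ ν ω) ∂μ :=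
    dpi_exp_integral_le h_int.neg hint2
  rw [integral_neg] at h2
  have := h2.trans h1
  rw [Real.exp_le_one_iff] at this
  linarith

lemma dpi_dv_bound {P Q : Measure Ω} [IsProbabilityMeasure P] [IsProbabilityMeasure Q]
    (hPQ : P ≪ Q) (hK : Integrable (llr P Q) P) {f : Ω → ℝ} (hf : Measurable f)
    {C : ℝ} (hC : ∀ ω, |f ω| ≤ C) :
    ∫ ω, f ω ∂P - Real.log (∫ ω, Real.exp (f ω) ∂Q) ≤ ∫ ω, llr P Q ω ∂P := by
  have hfP : Integrable f P :=
    (integrable_const C).mono' hf.aestronglyMeasurable (Filter.Eventually.of_forall hC)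
  have hfQ : Integrable (fun ω => Real.exp (f ω)) Q := by
    refine (integrable_const (Real.exp C)).mono'
      (hf.exp.aestronglyMeasurable) (Filter.Eventually.of_forall fun ω => ?_)
    rw [Real.norm_eq_abs, abs_of_pos (Real.exp_pos _)]
    exact Real.exp_le_exp.2 ((abs_le.1 (hC ω)).2)
  have hprob : IsProbabilityMeasure (Q.tilted f) := isProbabilityMeasure_tilted hfQ
  have hac : P ≪ Q.tilted f := hPQ.trans (absolutelyContinuous_tilted hfQ)
  have hint : Integrable (llr P (Q.tilted f)) P := integrable_llr_tilted_right hPQ hfP hK hfQ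
  have h0 : 0 ≤ ∫ ω, llr P (Q.tilted f) ω ∂P := dpi_llr_nonneg hac hint
  rw [integral_llr_tilted_right hPQ hfP hfQ hK] at h0
  linarith

lemma dpi_exp_pt {x t : ℝ} (h0 : 0 ≤ x) (h1 : x ≤ 1) :
    Real.exp (t * x) ≤ 1 - x + x * Real.exp t := by
  have := convexOn_exp.2 (Set.mem_univ (0:ℝ)) (Set.mem_univ t)
    (by linarith : (0:ℝ) ≤ 1 - x) h0 (by ring)
  simp only [smul_eq_mul, mul_zero, Real.exp_zero, mul_one] at this
  calc Real.exp (t * x) = Real.exp ((1-x) * 0 + x * t) := by ring_nf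
    _ ≤ (1-x) * 1 + x * Real.exp t := by simpa using this
    _ = 1 - x + x * Real.exp t := by ring

lemma dpi_optimal {p q : ℝ} (hp0 : 0 < p) (hp1 : p < 1) (hq0 : 0 < q) (hq1 : q < 1) :
    p * Real.log (p / q) + (1 - p) * Real.log ((1 - p) / (1 - q))
      = Real.log (p * (1 - q) / (q * (1 - p))) * p
        - Real.log (1 - q + q * Real.exp (Real.log (p * (1 - q) / (q * (1 - p))))) := by
  have h1p : (0:ℝ) < 1 - p := by linarith
  have h1q : (0:ℝ) < 1 - q := by linarith
  have hpos : 0 < p * (1 - q) / (q * (1 - p)) := by positivity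
  rw [Real.exp_log hpos]
  have harg : 1 - q + q * (p * (1 - q) / (q * (1 - p))) = (1 - q) / (1 - p) := by
    field_simp; ring
  rw [harg]
  rw [show p * (1 - q) / (q * (1 - p)) = (p/q) * ((1-q)/(1-p)) by field_simp]
  rw [Real.log_mul (by positivity) (by positivity),
    Real.log_div hp0.ne' hq0.ne', Real.log_div h1p.ne' h1q.ne',
    Real.log_div h1q.ne' h1p.ne']
  ring

end DPIaux

/-- The Kullback-Leibler divergence between two measures, with value `+∞`
when `P` is not absolutely continuous w.r.t. `Q` or when the log-likelihood
ratio is not integrable. -/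
noncomputable def KLdiv {Ω : Type*} [MeasurableSpace Ω] (P Q : Measure Ω) : ℝ≥0∞ :=
  if P ≪ Q ∧ Integrable (fun ω => Real.log (P.rnDeriv Q ω).toReal) P
  then ENNReal.ofReal (∫ ω, Real.log (P.rnDeriv Q ω).toReal ∂P)
  else ⊤

/-- The Kullback-Leibler divergence between Bernoulli distributions of
parameters `p` and `q`, as a real number (recall `Real.log 0 = 0` in Mathlib,
which realizes the conventions `0·log 0 = 0` and `0·log(0/0) = 0`). -/
noncomputable def klBin (p q : ℝ) : ℝ :=
  p * Real.log (p / q) + (1 - p) * Real.log ((1 - p) / (1 - q))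

/-- The Kullback-Leibler divergence between Bernoulli distributions of
parameters `p` and `q`, with values in `[0,+∞]`: it is `+∞` exactly when
`q ∈ {0,1}` and `p ≠ q`. -/
noncomputable def klBinE (p q : ℝ) : ℝ≥0∞ :=
  if (q = 0 ∧ p ≠ 0) ∨ (q = 1 ∧ p ≠ 1) then ⊤ else ENNReal.ofReal (klBin p q)

/-- Data-processing inequality with expectations of `[0,1]`-valued random
variables: `kl(E_P[X], E_Q[X]) ≤ KL(P,Q)`. -/
theorem kl_data_processing_expectation {Ω : Type*} [MeasurableSpace Ω]
    (P Q : Measure Ω) [IsProbabilityMeasure P] [IsProbabilityMeasure Q]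
    (X : Ω → ℝ) (hX : Measurable X) (hX01 : ∀ ω, X ω ∈ Set.Icc (0 : ℝ) 1) :
    klBinE (∫ ω, X ω ∂P) (∫ ω, X ω ∂Q) ≤ KLdiv P Q := by
  by_cases hcond : P ≪ Q ∧ Integrable (fun ω => Real.log (P.rnDeriv Q ω).toReal) P
  case neg => rw [KLdiv, if_neg hcond]; exact le_top
  obtain ⟨hPQ, hK⟩ := hcond
  rw [KLdiv, if_pos ⟨hPQ, hK⟩]
  have hKllr : Integrable (llr P Q) P := hK
  set K := ∫ ω, Real.log (P.rnDeriv Q ω).toReal ∂P with hKdef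
  set p := ∫ ω, X ω ∂P with hpdef
  set q := ∫ ω, X ω ∂Q with hqdef
  have hKllr' : ∫ ω, llr P Q ω ∂P = K := rfl
  have hintP : Integrable X P := (integrable_const 1).mono' hX.aestronglyMeasurable
    (Eventually.of_forall fun ω => by
      rw [Real.norm_eq_abs, abs_of_nonneg (hX01 ω).1]; exact (hX01 ω).2)
  have hintQ : Integrable X Q := (integrable_const 1).mono' hX.aestronglyMeasurable
    (Eventually.of_forall fun ω => by
      rw [Real.norm_eq_abs, abs_of_nonneg (hX01 ω).1]; exact (hX01 ω).2)
  have hp0 : 0 ≤ p := integral_nonneg fun ω => (hX01 ω).1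
  have hq0' : 0 ≤ q := integral_nonneg fun ω => (hX01 ω).1
  have hp1 : p ≤ 1 := by
    calc p ≤ ∫ ω, (1:ℝ) ∂P := integral_mono hintP (integrable_const 1) fun ω => (hX01 ω).2
      _ = 1 := by simp
  have hq1' : q ≤ 1 := by
    calc q ≤ ∫ ω, (1:ℝ) ∂Q := integral_mono hintQ (integrable_const 1) fun ω => (hX01 ω).2
      _ = 1 := by simp
  -- The Donsker--Varadhan chain of inequalities
  have chain : ∀ t : ℝ, t * p - Real.log (1 - q + q * Real.exp t) ≤ K := by
    intro t
    have hC : ∀ ω, |t * X ω| ≤ |t| := fun ω => by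
      rw [abs_mul]
      calc |t| * |X ω| ≤ |t| * 1 := by
            refine mul_le_mul_of_nonneg_left ?_ (abs_nonneg t)
            rw [abs_of_nonneg (hX01 ω).1]; exact (hX01 ω).2
        _ = |t| := mul_one _
    have hDV := dpi_dv_bound hPQ hKllr (f := fun ω => t * X ω) (hX.const_mul t) hC
    rw [integral_const_mul, hKllr'] at hDV
    have hexpint : Integrable (fun ω => Real.exp (t * X ω)) Q := by
      refine (integrable_const (Real.exp |t|)).mono'
        ((hX.const_mul t).exp.aestronglyMeasurable) (Eventually.of_forall fun ω => ?_)
      rw [Real.norm_eq_abs, abs_of_pos (Real.exp_pos _)]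
      exact Real.exp_le_exp.2 ((abs_le.1 (hC ω)).2)
    have hrhsint : Integrable (fun ω => 1 - X ω + X ω * Real.exp t) Q :=
      ((integrable_const 1).sub hintQ).add (hintQ.mul_const _)
    have h2 : ∫ ω, Real.exp (t * X ω) ∂Q ≤ 1 - q + q * Real.exp t := by
      calc ∫ ω, Real.exp (t * X ω) ∂Q ≤ ∫ ω, (1 - X ω + X ω * Real.exp t) ∂Q :=
            integral_mono hexpint hrhsint fun ω => dpi_exp_pt (hX01 ω).1 (hX01 ω).2
        _ = 1 - q + q * Real.exp t := by
            rw [integral_add (f := fun ω => (1:ℝ) - X ω) (g := fun ω => X ω * Real.exp t)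
                ((integrable_const 1).sub hintQ) (hintQ.mul_const _),
              integral_sub (f := fun _ => (1:ℝ)) (g := X) (integrable_const 1) hintQ,
              integral_mul_const]
            simp [← hqdef]
    have hpos : 0 < ∫ ω, Real.exp (t * X ω) ∂Q := integral_exp_pos hexpint
    have h3 : Real.log (∫ ω, Real.exp (t * X ω) ∂Q) ≤ Real.log (1 - q + q * Real.exp t) :=
      Real.log_le_log hpos h2
    linarith
  have hK0 : 0 ≤ K := by rw [← hKllr']; exact dpi_llr_nonneg hPQ hKllr
  by_cases hq0 : q = 0
  · have hXQ : X =ᵐ[Q] 0 :=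
      (integral_eq_zero_iff_of_nonneg (fun ω => (hX01 ω).1) hintQ).mp hq0
    have hpz : p = 0 := by
      rw [hpdef, integral_congr_ae (hPQ.ae_le hXQ)]; simp
    rw [klBinE, if_neg (by simp [hq0, hpz]), hpz, hq0]
    simp [klBin]
  by_cases hq1 : q = 1
  · have hXQ : (fun ω => 1 - X ω) =ᵐ[Q] 0 := by
      refine (integral_eq_zero_iff_of_nonneg (fun ω => by simp only [Pi.zero_apply]; linarith [(hX01 ω).2]) ?_).mp ?_
      · exact (integrable_const 1).sub hintQ
      · rw [integral_sub (integrable_const 1) hintQ]; simp [← hqdef, hq1]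
    have hpz : p = 1 := by
      have h1 : ∫ ω, (1 - X ω) ∂P = 0 := by
        rw [integral_congr_ae (hPQ.ae_le hXQ)]; simp
      rw [integral_sub (integrable_const 1) hintP] at h1
      simp only [integral_const, measure_univ, probReal_univ, ENNReal.toReal_one, smul_eq_mul, one_mul] at h1
      rw [hpdef]; linarith
    rw [klBinE, if_neg (by simp [hq0, hq1, hpz]), hpz, hq1]
    simp [klBin]
  -- now 0 < q < 1
  have hq0x : 0 < q := lt_of_le_of_ne hq0' (Ne.symm hq0)
  have hq1x : q < 1 := lt_of_le_of_ne hq1' hq1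
  have h1q : (0:ℝ) < 1 - q := by linarith
  rw [klBinE, if_neg (by simp [hq0, hq1])]
  refine ENNReal.ofReal_le_ofReal ?_
  by_cases hp : p = 0
  · have hkl : klBin p q = -Real.log (1 - q) := by
      simp [klBin, hp, Real.log_div one_ne_zero h1q.ne']
    rw [hkl]
    have hT : Tendsto (fun t : ℝ => -Real.log (1 - q + q * Real.exp t)) atBot
        (nhds (-Real.log (1 - q))) := by
      have h1 : Tendsto (fun t : ℝ => 1 - q + q * Real.exp t) atBot (nhds (1 - q)) := by
        have := (Real.tendsto_exp_atBot.const_mul q).const_add (1 - q)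
        simpa using this
      exact ((Real.continuousAt_log h1q.ne').tendsto.comp h1).neg
    refine le_of_tendsto hT (Eventually.of_forall fun t => ?_)
    have := chain t
    rw [hp] at this
    linarith
  by_cases hp1' : p = 1
  · have hkl : klBin p q = -Real.log q := by
      simp [klBin, hp1', Real.log_div one_ne_zero hq0x.ne']
    rw [hkl]
    have hrw : ∀ t : ℝ, t * p - Real.log (1 - q + q * Real.exp t)
        = -Real.log ((1 - q) * Real.exp (-t) + q) := by
      intro t
      have hG : 0 < 1 - q + q * Real.exp t := by nlinarith [Real.exp_pos t]
      have key : (1 - q) * Real.exp (-t) + q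
          = Real.exp (-t) * (1 - q + q * Real.exp t) := by
        have h : Real.exp (-t) * Real.exp t = 1 := by rw [← Real.exp_add]; simp
        nlinarith [h]
      rw [key, Real.log_mul (Real.exp_ne_zero _) hG.ne', Real.log_exp, hp1']
      ring
    have hT : Tendsto (fun t : ℝ => -Real.log ((1 - q) * Real.exp (-t) + q)) atTop
        (nhds (-Real.log q)) := by
      have h1 : Tendsto (fun t : ℝ => (1 - q) * Real.exp (-t) + q) atTop (nhds q) := by
        have := (Real.tendsto_exp_neg_atTop_nhds_zero.const_mul (1 - q)).add_const q
        simpa using this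
      exact ((Real.continuousAt_log hq0x.ne').tendsto.comp h1).neg
    refine le_of_tendsto hT (Eventually.of_forall fun t => ?_)
    rw [← hrw t]
    exact chain t
  · have hp0x : 0 < p := lt_of_le_of_ne hp0 (Ne.symm hp)
    have hp1x : p < 1 := lt_of_le_of_ne hp1 hp1'
    have := chain (Real.log (p * (1 - q) / (q * (1 - p))))
    rw [klBin, dpi_optimal hp0x hp1x hq0x hq1x]
    linarith [this]
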